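/- Let (X, ρᵢ : X → Xᵢ) be the limit of a cofiltered diagram of topological spaces, and let (Y, fᵢ : Y → Xᵢ) be a cone over the same diagram consisting of surjective continuous maps. Then the mediating map f : Y → X has dense image. -/

import Mathlib

open CategoryTheory Limits

attribute [local instance] CategoryTheory.ConcreteCategory.instFunLike

/-- If `(X, ρᵢ)` is a cofiltered limit of topological spaces and `(Y, fᵢ)` is a
cone over the same diagram with all legs surjective, then the mediating map
`Y → X` has dense image. -/
theorem denseRange_lift_of_surjective_cone
    {I : Type u} [SmallCategory I] [IsCofiltered I]
    (F : I ⥤ TopCat.{u}) (c : Cone F) (hc : IsLimit c) (d : Cone F)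
    (hsurj : ∀ i : I, Function.Surjective (d.π.app i)) :
    DenseRange (hc.lift d) := by
  have hB := TopCat.isTopologicalBasis_cofiltered_limit F c hc
    (fun j => {U | IsOpen U}) (fun j => TopologicalSpace.isTopologicalBasis_opens)
    (fun i => isOpen_univ) (fun i U1 U2 h1 h2 => h1.inter h2)
    (fun i j f V hV => hV.preimage (F.map f).hom.continuous)
  rw [DenseRange, hB.dense_iff]
  rintro o ⟨j, V, hV, rfl⟩ ⟨x, hx⟩
  obtain ⟨y, hy⟩ := hsurj j (c.π.app j x)
  refine ⟨hc.lift d y, ?_, ⟨y, rfl⟩⟩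
  have : c.π.app j (hc.lift d y) = d.π.app j y :=
    ConcreteCategory.congr_hom (hc.fac d j) y
  simp only [Set.mem_preimage, this, hy]
  exact hx
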